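/- For every integer N ≥ 1, the number of parent functions on [N] satisfying condition (P3) equals the (N−1)-th Catalan number; that is, #(𝒫_N) = C_{N−1} = (1/N)·binom(2N−2, N−1). -/

import Mathlib

/-- A parent function on `[N] = {1, …, N}`, modeled 0-indexed on `Fin N`
(index `i : Fin N` corresponds to the book `i + 1`): `P(i) > i` for all
`1 ≤ i ≤ N - 1` and `P(N) = N`. -/
def IsParentFn (N : ℕ) (P : Fin N → Fin N) : Prop :=
  (∀ i : Fin N, (i : ℕ) + 1 < N → i < P i) ∧
  (∀ i : Fin N, (i : ℕ) + 1 = N → P i = i)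

/-- Condition (P3): for every pair `1 ≤ i < j ≤ N`, if `j < P(i)` then `P(j) ≤ P(i)`. -/
def CondP3 (N : ℕ) (P : Fin N → Fin N) : Prop :=
  ∀ i j : Fin N, i < j → j < P i → P j ≤ P i

def good (N : ℕ) (P : Fin N → Fin N) : Prop := IsParentFn N P ∧ CondP3 N P

noncomputable def g (N : ℕ) : ℕ := Nat.card {P : Fin N → Fin N // good N P}

def recon (N m : ℕ) (hm1 : 1 ≤ m) (hm2 : m ≤ N)
    (Q : Fin m → Fin m) (R : Fin (N + 1 - m) → Fin (N + 1 - m)) :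
    Fin (N + 1) → Fin (N + 1) := fun i =>
  if h0 : (i : ℕ) = 0 then ⟨m, by omega⟩
  else if h1 : (i : ℕ) < m then
    ⟨(Q ⟨(i : ℕ) - 1, by omega⟩ : ℕ) + 1, by
      have := (Q ⟨(i : ℕ) - 1, by omega⟩).isLt; omega⟩
  else
    ⟨(R ⟨(i : ℕ) - m, by have := i.isLt; omega⟩ : ℕ) + m, by
      have := (R ⟨(i : ℕ) - m, by have := i.isLt; omega⟩).isLt; omega⟩

theorem recon_zero {N m : ℕ} (hm1 : 1 ≤ m) (hm2 : m ≤ N) (Q : Fin m → Fin m)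
    (R : Fin (N + 1 - m) → Fin (N + 1 - m)) (i : Fin (N + 1)) (h : (i : ℕ) = 0) :
    (recon N m hm1 hm2 Q R i : ℕ) = m := by
  simp only [recon, dif_pos h]

theorem recon_mid {N m : ℕ} (hm1 : 1 ≤ m) (hm2 : m ≤ N) (Q : Fin m → Fin m)
    (R : Fin (N + 1 - m) → Fin (N + 1 - m)) (i : Fin (N + 1)) (h0 : 0 < (i : ℕ))
    (h1 : (i : ℕ) < m) :
    (recon N m hm1 hm2 Q R i : ℕ) = (Q ⟨(i : ℕ) - 1, by omega⟩ : ℕ) + 1 := by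
  simp only [recon, dif_neg (by omega : ¬ (i : ℕ) = 0), dif_pos h1]

theorem recon_high {N m : ℕ} (hm1 : 1 ≤ m) (hm2 : m ≤ N) (Q : Fin m → Fin m)
    (R : Fin (N + 1 - m) → Fin (N + 1 - m)) (i : Fin (N + 1)) (h : m ≤ (i : ℕ)) :
    (recon N m hm1 hm2 Q R i : ℕ) = (R ⟨(i : ℕ) - m, by have := i.isLt; omega⟩ : ℕ) + m := by
  simp only [recon, dif_neg (by omega : ¬ (i : ℕ) = 0), dif_neg (by omega : ¬ (i : ℕ) < m)]

theorem recon_good {N m : ℕ} (hm1 : 1 ≤ m) (hm2 : m ≤ N)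
    {Q : Fin m → Fin m} {R : Fin (N + 1 - m) → Fin (N + 1 - m)}
    (hQ : good m Q) (hR : good (N + 1 - m) R) :
    good (N + 1) (recon N m hm1 hm2 Q R) := by
  obtain ⟨⟨hQ1, hQ2⟩, hQ3⟩ := hQ
  obtain ⟨⟨hR1, hR2⟩, hR3⟩ := hR
  refine ⟨⟨?_, ?_⟩, ?_⟩
  · intro i hi
    rw [Fin.lt_def]
    rcases Nat.eq_zero_or_pos (i : ℕ) with h0 | h0
    · rw [recon_zero hm1 hm2 Q R i h0]; omega
    · rcases lt_or_ge (i : ℕ) m with h1 | h1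
      · rw [recon_mid hm1 hm2 Q R i h0 h1]
        have h2 := hQ1 ⟨(i : ℕ) - 1, by omega⟩ (by simp; omega)
        rw [Fin.lt_def] at h2
        simp only [Fin.val_mk] at h2
        omega
      · rw [recon_high hm1 hm2 Q R i h1]
        have h2 := hR1 ⟨(i : ℕ) - m, by have := i.isLt; omega⟩ (by simp; omega)
        rw [Fin.lt_def] at h2
        simp only [Fin.val_mk] at h2
        omega
  · intro i hi
    have hiN : (i : ℕ) = N := by omega
    apply Fin.ext
    rw [recon_high hm1 hm2 Q R i (by omega)]
    have h2 := hR2 ⟨(i : ℕ) - m, by have := i.isLt; omega⟩ (by simp; omega)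
    have h3 : ((R ⟨(i : ℕ) - m, by have := i.isLt; omega⟩ : Fin (N+1-m)) : ℕ) = (i : ℕ) - m := by
      rw [h2]
    omega
  · intro i j hij hjP
    rw [Fin.lt_def] at hij hjP
    rw [Fin.le_def]
    rcases Nat.eq_zero_or_pos (i : ℕ) with h0 | h0
    · -- i = 0
      rw [recon_zero hm1 hm2 Q R i h0] at hjP ⊢
      have hj0 : 0 < (j : ℕ) := by omega
      rw [recon_mid hm1 hm2 Q R j hj0 hjP]
      have := (Q ⟨(j : ℕ) - 1, by omega⟩).isLt
      omega
    · rcases lt_or_ge (i : ℕ) m with h1 | h1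
      · -- 0 < i < m
        rw [recon_mid hm1 hm2 Q R i h0 h1] at hjP ⊢
        have hQi := (Q ⟨(i : ℕ) - 1, by omega⟩).isLt
        have hjm : (j : ℕ) < m := by omega
        have hj0 : 0 < (j : ℕ) := by omega
        rw [recon_mid hm1 hm2 Q R j hj0 hjm]
        have h4 := hQ3 ⟨(i : ℕ) - 1, by omega⟩ ⟨(j : ℕ) - 1, by omega⟩
          (by rw [Fin.mk_lt_mk]; omega)
          (by rw [Fin.lt_def]; dsimp only; omega)
        rw [Fin.le_def] at h4
        omega
      · -- m ≤ i
        rw [recon_high hm1 hm2 Q R i h1] at hjP ⊢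
        have hjm : m ≤ (j : ℕ) := by omega
        rw [recon_high hm1 hm2 Q R j hjm]
        have h4 := hR3 ⟨(i : ℕ) - m, by have := i.isLt; omega⟩
          ⟨(j : ℕ) - m, by have := j.isLt; omega⟩
          (by rw [Fin.mk_lt_mk]; omega)
          (by rw [Fin.lt_def]; dsimp only; omega)
        rw [Fin.le_def] at h4
        omega

set_option maxHeartbeats 2000000 in
theorem good_decomp {N : ℕ} (hN : 1 ≤ N) {P : Fin (N + 1) → Fin (N + 1)}
    (hP : good (N + 1) P) :
    ∃ (m : ℕ) (hm1 : 1 ≤ m) (hm2 : m ≤ N) (Q : Fin m → Fin m)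
      (R : Fin (N + 1 - m) → Fin (N + 1 - m)),
      good m Q ∧ good (N + 1 - m) R ∧ recon N m hm1 hm2 Q R = P := by
  obtain ⟨⟨h1, h2⟩, h3⟩ := hP
  have h00 : ((0 : Fin (N + 1)) : ℕ) = 0 := rfl
  have hm1 : 1 ≤ (P 0 : ℕ) := by
    have := h1 0 (by omega)
    rw [Fin.lt_def] at this; omega
  have hm2 : (P 0 : ℕ) ≤ N := by have := (P 0).isLt; omega
  set m := (P 0 : ℕ) with hm
  have hA : ∀ j : Fin (N + 1), 0 < (j : ℕ) → (j : ℕ) < m → (P j : ℕ) ≤ m := by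
    intro j hj0 hjm
    have := h3 0 j (by rw [Fin.lt_def]; omega) (by rw [Fin.lt_def]; omega)
    rw [Fin.le_def] at this; omega
  have hB : ∀ j : Fin (N + 1), (j : ℕ) < N → (j : ℕ) < (P j : ℕ) := by
    intro j hj
    have := h1 j (by omega); rw [Fin.lt_def] at this; omega
  have hC : ∀ j : Fin (N + 1), (j : ℕ) = N → (P j : ℕ) = N := by
    intro j hj
    have := h2 j (by omega)
    rw [this]; omega
  refine ⟨m, hm1, hm2,
    fun j => if h : (j : ℕ) + 1 = m then j else
      ⟨(P ⟨(j : ℕ) + 1, by have := j.isLt; omega⟩ : ℕ) - 1, by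
        have := hA ⟨(j : ℕ) + 1, by have := j.isLt; omega⟩ (by dsimp; omega)
          (by dsimp; have := j.isLt; omega)
        omega⟩,
    fun j => ⟨(P ⟨(j : ℕ) + m, by have := j.isLt; omega⟩ : ℕ) - m, by
      have := (P ⟨(j : ℕ) + m, by have := j.isLt; omega⟩).isLt
      have hj := j.isLt; omega⟩,
    ⟨⟨?_, ?_⟩, ?_⟩, ⟨⟨?_, ?_⟩, ?_⟩, ?_⟩
  · -- Q increasing
    intro j hj
    dsimp only
    rw [dif_neg (by omega)]
    rw [Fin.lt_def]; dsimp only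
    have := hB ⟨(j : ℕ) + 1, by have := j.isLt; omega⟩ (by dsimp; omega)
    dsimp at this; omega
  · -- Q root
    intro j hj
    dsimp only
    rw [dif_pos hj]
  · -- Q P3
    intro a b hab hbQ
    dsimp only at hbQ ⊢
    rw [Fin.lt_def] at hab
    by_cases ha : (a : ℕ) + 1 = m
    · rw [dif_pos ha] at hbQ
      rw [Fin.lt_def] at hbQ; omega
    · rw [dif_neg ha] at hbQ ⊢
      rw [Fin.lt_def] at hbQ; dsimp only at hbQ
      have hPa1 : (a : ℕ) + 1 < (P ⟨(a : ℕ) + 1, by have := a.isLt; omega⟩ : ℕ) := by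
        have := hB ⟨(a : ℕ) + 1, by have := a.isLt; omega⟩ (by dsimp; have := a.isLt; omega)
        dsimp at this; omega
      by_cases hb : (b : ℕ) + 1 = m
      · rw [dif_pos hb]
        rw [Fin.le_def]; dsimp only; omega
      · rw [dif_neg hb]
        rw [Fin.le_def]; dsimp only
        have h4 := h3 ⟨(a : ℕ) + 1, by have := a.isLt; omega⟩
          ⟨(b : ℕ) + 1, by have := b.isLt; omega⟩
          (by rw [Fin.mk_lt_mk]; omega)
          (by rw [Fin.lt_def]; dsimp only; omega)
        rw [Fin.le_def] at h4
        omega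
  · -- R increasing
    intro j hj
    dsimp only
    rw [Fin.lt_def]; dsimp only
    have := hB ⟨(j : ℕ) + m, by have := j.isLt; omega⟩ (by dsimp; omega)
    dsimp at this; omega
  · -- R root
    intro j hj
    dsimp only
    apply Fin.ext
    dsimp only
    have := hC ⟨(j : ℕ) + m, by have := j.isLt; omega⟩ (by dsimp; omega)
    omega
  · -- R P3
    intro a b hab hbR
    dsimp only at hbR ⊢
    rw [Fin.lt_def] at hab hbR
    dsimp only at hbR
    rw [Fin.le_def]; dsimp only
    have hb := b.isLt
    rcases lt_or_eq_of_le (show (a : ℕ) + m ≤ N by have := a.isLt; omega) with haN | haN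
    · have hPa : (a : ℕ) + m < (P ⟨(a : ℕ) + m, by omega⟩ : ℕ) := by
        have := hB ⟨(a : ℕ) + m, by omega⟩ (by dsimp; omega)
        dsimp at this; omega
      have h4 := h3 ⟨(a : ℕ) + m, by omega⟩ ⟨(b : ℕ) + m, by have := b.isLt; omega⟩
        (by rw [Fin.mk_lt_mk]; omega)
        (by rw [Fin.lt_def]; dsimp only; omega)
      rw [Fin.le_def] at h4
      omega
    · exfalso
      have := hC ⟨(a : ℕ) + m, by omega⟩ (by dsimp; omega)
      omega
  · -- recon = P
    funext i
    apply Fin.ext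
    rcases Nat.eq_zero_or_pos (i : ℕ) with h0 | h0
    · rw [recon_zero _ _ _ _ _ h0]
      have : i = 0 := Fin.ext (by rw [h0, h00])
      rw [this]
    · rcases lt_or_ge (i : ℕ) m with hlt | hge
      · rw [recon_mid _ _ _ _ _ h0 hlt]
        dsimp only
        rw [dif_neg (by omega)]
        dsimp only
        have he : (⟨(i : ℕ) - 1 + 1, by have := i.isLt; omega⟩ : Fin (N + 1)) = i :=
          Fin.ext (by dsimp; omega)
        rw [he]
        have := hB i (by omega)
        omega
      · rw [recon_high _ _ _ _ _ hge]
        dsimp only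
        have he : (⟨(i : ℕ) - m + m, by have := i.isLt; omega⟩ : Fin (N + 1)) = i :=
          Fin.ext (by dsimp; omega)
        rw [he]
        have hPm : m ≤ (P i : ℕ) := by
          rcases lt_or_eq_of_le (show (i : ℕ) ≤ N by have := i.isLt; omega) with hiN | hiN
          · have := hB i hiN; omega
          · have := hC i hiN; omega
        omega

theorem g_one : g 1 = 1 := by
  rw [g, Nat.card_eq_one_iff_unique]
  refine ⟨inferInstance, ⟨⟨fun _ => 0, ⟨⟨fun i hi => absurd hi (by omega),
    fun i hi => Subsingleton.elim _ _⟩, fun i j hij => absurd hij ?_⟩⟩⟩⟩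
  rw [Fin.lt_def]
  have := i.isLt; have := j.isLt; omega

set_option maxHeartbeats 2000000 in
theorem g_succ (N : ℕ) (hN : 1 ≤ N) :
    g (N + 1) = ∑ m : Fin N, g ((m : ℕ) + 1) * g (N + 1 - ((m : ℕ) + 1)) := by
  classical
  letI : ∀ n : ℕ, Fintype {f : Fin n → Fin n // good n f} := fun n => Fintype.ofFinite _
  have key : Nat.card (Σ m : Fin N,
      ({Q : Fin ((m : ℕ) + 1) → Fin ((m : ℕ) + 1) // good ((m : ℕ) + 1) Q} ×
       {R : Fin (N + 1 - ((m : ℕ) + 1)) → Fin (N + 1 - ((m : ℕ) + 1)) //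
         good (N + 1 - ((m : ℕ) + 1)) R})) = g (N + 1) := by
    apply Nat.card_eq_of_bijective
      (fun x => ⟨recon N ((x.1 : ℕ) + 1) (by omega) x.1.isLt x.2.1.1 x.2.2.1,
        recon_good _ _ x.2.1.2 x.2.2.2⟩)
    constructor
    · rintro ⟨m1, ⟨Q1, hQ1⟩, ⟨R1, hR1⟩⟩ ⟨m2, ⟨Q2, hQ2⟩, ⟨R2, hR2⟩⟩ hfg
      have hfg' := congrArg Subtype.val hfg
      dsimp only at hfg'
      have hm : m1 = m2 := by
        have h0 := congrArg (fun f => (f 0 : ℕ)) hfg'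
        rw [recon_zero _ _ _ _ 0 rfl, recon_zero _ _ _ _ 0 rfl] at h0
        exact Fin.ext (by omega)
      subst hm
      apply congrArg (Sigma.mk m1)
      refine Prod.ext (Subtype.ext ?_) (Subtype.ext ?_)
      · funext j
        show Q1 j = Q2 j
        by_cases hj : (j : ℕ) + 1 = (m1 : ℕ) + 1
        · rw [hQ1.1.2 j hj, hQ2.1.2 j hj]
        · have hjN' : (j : ℕ) + 1 < N + 1 := by
            have := m1.isLt; have := j.isLt; omega
          have h0 := congrArg Fin.val (congrFun hfg' ⟨(j : ℕ) + 1, hjN'⟩)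
          have e1 := recon_mid (m := (m1 : ℕ) + 1) (by omega) m1.isLt Q1 R1
            ⟨(j : ℕ) + 1, hjN'⟩ (by dsimp; omega) (by dsimp; have := j.isLt; omega)
          have e2 := recon_mid (m := (m1 : ℕ) + 1) (by omega) m1.isLt Q2 R2
            ⟨(j : ℕ) + 1, hjN'⟩ (by dsimp; omega) (by dsimp; have := j.isLt; omega)
          have hj' : j = ⟨((⟨(j : ℕ) + 1, hjN'⟩ : Fin (N + 1)) : ℕ) - 1,
              by dsimp; have := j.isLt; omega⟩ := Fin.ext (by dsimp; try omega)
          apply Fin.ext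
          rw [hj']
          omega
      · funext j
        show R1 j = R2 j
        have hjN : (j : ℕ) + ((m1 : ℕ) + 1) < N + 1 := by have := j.isLt; omega
        have h0 := congrArg Fin.val (congrFun hfg' ⟨(j : ℕ) + ((m1 : ℕ) + 1), hjN⟩)
        have e1 := recon_high (m := (m1 : ℕ) + 1) (by omega) m1.isLt Q1 R1
          ⟨(j : ℕ) + ((m1 : ℕ) + 1), hjN⟩ (by dsimp; omega)
        have e2 := recon_high (m := (m1 : ℕ) + 1) (by omega) m1.isLt Q2 R2
          ⟨(j : ℕ) + ((m1 : ℕ) + 1), hjN⟩ (by dsimp; omega)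
        have hj' : j = ⟨((⟨(j : ℕ) + ((m1 : ℕ) + 1), hjN⟩ : Fin (N + 1)) : ℕ) - ((m1 : ℕ) + 1),
            by dsimp; have := j.isLt; omega⟩ := Fin.ext (by dsimp; try omega)
        apply Fin.ext
        rw [hj']
        omega
    · rintro ⟨P, hP⟩
      obtain ⟨m, hm1, hm2, Q, R, hQ, hR, hrec⟩ := good_decomp hN hP
      obtain ⟨m', rfl⟩ : ∃ m', m = m' + 1 := ⟨m - 1, by omega⟩
      exact ⟨⟨⟨m', by omega⟩, ⟨⟨Q, hQ⟩, ⟨R, hR⟩⟩⟩, Subtype.ext hrec⟩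
  rw [← key, Nat.card_eq_fintype_card, Fintype.card_sigma]
  refine Finset.sum_congr rfl fun m _ => ?_
  rw [Fintype.card_prod, g, g, Nat.card_eq_fintype_card, Nat.card_eq_fintype_card]

theorem g_cat (N : ℕ) (hN : 1 ≤ N) : g N = catalan (N - 1) := by
  induction N using Nat.strong_induction_on with
  | _ N ih =>
    rcases N with _ | N'
    · omega
    rcases N' with _ | K
    · show g 1 = catalan 0
      rw [g_one, catalan_zero]
    · rw [g_succ (K + 1) (by omega)]
      show _ = catalan (K + 1)
      rw [catalan_succ]
      refine Finset.sum_congr rfl fun m _ => ?_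
      have h1 : g ((m : ℕ) + 1) = catalan (m : ℕ) := by
        rw [ih ((m : ℕ) + 1) (by have := m.isLt; omega) (by omega)]
        simp
      have h2 : g (K + 1 + 1 - ((m : ℕ) + 1)) = catalan (K - (m : ℕ)) := by
        rw [ih (K + 1 + 1 - ((m : ℕ) + 1)) (by have := m.isLt; omega)
          (by have := m.isLt; omega)]
        congr 1
        have := m.isLt; omega
      rw [h1, h2]


/-- The number of parent functions on `[N]` satisfying condition (P3) is the
`(N-1)`-st Catalan number `C_{N-1} = (1/N) * binom(2N-2, N-1)`. -/
theorem card_parentFn_eq_catalan (N : ℕ) (hN : 1 ≤ N) :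
    Nat.card {P : Fin N → Fin N // IsParentFn N P ∧ CondP3 N P} = catalan (N - 1) ∧
    catalan (N - 1) = (2 * N - 2).choose (N - 1) / N := by
  constructor
  · exact g_cat N hN
  · rw [catalan_eq_centralBinom_div, Nat.centralBinom]
    congr 1
    · congr 1
      omega
    · omega
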